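/- If V is a set of 2n points (n ≥ 2) in the closed unit ball of ℝⁿ maximizing the minimum pairwise distance, then V is the vertex set of a regular cross-polytope inscribed in the unit sphere, i.e., V = {±e₁, ..., ±eₙ} for some orthonormal basis e₁,...,eₙ. -/

import Mathlib

open EuclideanSpace

/-- The minimum pairwise distance of a finite point set (as an infimum). -/
noncomputable def minPairDist {n : ℕ} (V : Finset (EuclideanSpace ℝ (Fin n))) : ℝ :=
  sInf {d : ℝ | ∃ u ∈ V, ∃ v ∈ V, u ≠ v ∧ d = dist u v}

open Finset Module InnerProductSpace

variable {E : Type*} [NormedAddCommGroup E] [InnerProductSpace ℝ E] [FiniteDimensional ℝ E]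

/-- At most `2 * finrank K` nonzero vectors in `K` with pairwise nonpositive inner products. -/
lemma obtuse_card_le : ∀ (m : ℕ) (K : Submodule ℝ E), finrank ℝ K ≤ m →
    ∀ S : Finset E, (∀ w ∈ S, w ∈ K) → (0 : E) ∉ S →
    (∀ u ∈ S, ∀ w ∈ S, u ≠ w → ⟪u, w⟫_ℝ ≤ 0) → S.card ≤ 2 * m := by
  intro m
  induction m with
  | zero =>
    intro K hK S hSK h0 _
    interval_cases h : finrank ℝ K
    have hKbot : K = ⊥ := Submodule.finrank_eq_zero.mp h
    have : S = ∅ := by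
      apply Finset.eq_empty_of_forall_notMem
      intro w hw
      have := hSK w hw
      rw [hKbot, Submodule.mem_bot] at this
      exact h0 (this ▸ hw)
    simp [this]
  | succ m IH =>
    intro K hK S hSK h0 hobt
    classical
    rcases S.eq_empty_or_nonempty with rfl | ⟨v₀, hv₀⟩
    · simp
    have hv₀ne : v₀ ≠ 0 := fun h => h0 (h ▸ hv₀)
    have hv₀sq : (0:ℝ) < ⟪v₀, v₀⟫_ℝ := by
      rw [real_inner_self_eq_norm_sq]
      exact pow_pos (norm_pos_iff.mpr hv₀ne) 2
    set proj : E → E := fun w => w - (⟪v₀, w⟫_ℝ / ⟪v₀, v₀⟫_ℝ) • v₀ with hproj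
    have hprojinner : ∀ w, ⟪v₀, proj w⟫_ℝ = 0 := by
      intro w
      simp only [hproj, inner_sub_right, real_inner_smul_right]
      field_simp
      ring
    have hprojprod : ∀ w₁ w₂, ⟪proj w₁, proj w₂⟫_ℝ
        = ⟪w₁, w₂⟫_ℝ - ⟪v₀, w₁⟫_ℝ * ⟪v₀, w₂⟫_ℝ / ⟪v₀, v₀⟫_ℝ := by
      intro w₁ w₂
      simp only [hproj, inner_sub_left, inner_sub_right, real_inner_smul_left,
        real_inner_smul_right, real_inner_comm w₁ v₀]
      field_simp
      ring
    have hobt' : ∀ w₁ ∈ S.erase v₀, ∀ w₂ ∈ S.erase v₀, w₁ ≠ w₂ →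
        ⟪proj w₁, proj w₂⟫_ℝ ≤ 0 := by
      intro w₁ hw₁ w₂ hw₂ hne
      rw [hprojprod]
      have h1 : ⟪w₁, w₂⟫_ℝ ≤ 0 :=
        hobt w₁ (Finset.mem_of_mem_erase hw₁) w₂ (Finset.mem_of_mem_erase hw₂) hne
      have h2 : ⟪v₀, w₁⟫_ℝ ≤ 0 :=
        hobt v₀ hv₀ w₁ (Finset.mem_of_mem_erase hw₁) (Ne.symm (Finset.ne_of_mem_erase hw₁))
      have h3 : ⟪v₀, w₂⟫_ℝ ≤ 0 :=
        hobt v₀ hv₀ w₂ (Finset.mem_of_mem_erase hw₂) (Ne.symm (Finset.ne_of_mem_erase hw₂))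
      have h4 : 0 ≤ ⟪v₀, w₁⟫_ℝ * ⟪v₀, w₂⟫_ℝ / ⟪v₀, v₀⟫_ℝ :=
        div_nonneg (by nlinarith) hv₀sq.le
      linarith
    set K' : Submodule ℝ E := K ⊓ (ℝ ∙ v₀)ᗮ with hK'
    have hv₀K : v₀ ∈ K := hSK v₀ hv₀
    have hK'lt : K' < K := by
      refine lt_of_le_of_ne inf_le_left ?_
      intro h
      have hmem : v₀ ∈ K' := h ▸ hv₀K
      have h2 := (Submodule.mem_inf.mp hmem).2
      rw [Submodule.mem_orthogonal_singleton_iff_inner_right] at h2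
      exact absurd h2 (ne_of_gt hv₀sq)
    have hK'le : finrank ℝ K' ≤ m := by
      have := Submodule.finrank_lt_finrank_of_lt hK'lt
      omega
    have hprojmem : ∀ w ∈ S, proj w ∈ K' := by
      intro w hw
      refine Submodule.mem_inf.mpr ⟨?_, ?_⟩
      · exact Submodule.sub_mem K (hSK w hw) (Submodule.smul_mem K _ hv₀K)
      · rw [Submodule.mem_orthogonal_singleton_iff_inner_right]
        exact hprojinner w
    set A : Finset E := (S.erase v₀).filter (fun w => proj w ≠ 0) with hA
    set B : Finset E := (S.erase v₀).filter (fun w => ¬ proj w ≠ 0) with hB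
    have hAB : A.card + B.card = (S.erase v₀).card := Finset.card_filter_add_card_filter_not _
    have hinj : Set.InjOn proj A := by
      intro w₁ hw₁ w₂ hw₂ heq
      by_contra hne
      have hle := hobt' w₁ (Finset.mem_of_mem_filter w₁ hw₁) w₂ (Finset.mem_of_mem_filter w₂ hw₂) hne
      rw [← heq, real_inner_self_eq_norm_sq] at hle
      have : proj w₁ ≠ 0 := (Finset.mem_filter.mp hw₁).2
      have : (0:ℝ) < ‖proj w₁‖ ^ 2 := pow_pos (norm_pos_iff.mpr this) 2
      linarith
    have hAcard : A.card ≤ 2 * m := by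
      have hcardim : (A.image proj).card = A.card := Finset.card_image_of_injOn hinj
      rw [← hcardim]
      refine IH K' hK'le (A.image proj) ?_ ?_ ?_
      · intro t ht
        obtain ⟨w, hw, rfl⟩ := Finset.mem_image.mp ht
        exact hprojmem w (Finset.mem_of_mem_erase (Finset.mem_of_mem_filter w hw))
      · intro h0'
        obtain ⟨w, hw, hwe⟩ := Finset.mem_image.mp h0'
        exact (Finset.mem_filter.mp hw).2 hwe
      · intro t₁ ht₁ t₂ ht₂ htne
        obtain ⟨w₁, hw₁, rfl⟩ := Finset.mem_image.mp ht₁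
        obtain ⟨w₂, hw₂, rfl⟩ := Finset.mem_image.mp ht₂
        exact hobt' w₁ (Finset.mem_of_mem_filter w₁ hw₁) w₂ (Finset.mem_of_mem_filter w₂ hw₂)
          (fun h => htne (h ▸ rfl))
    have hBcard : B.card ≤ 1 := by
      refine Finset.card_le_one.mpr ?_
      intro w₁ hw₁ w₂ hw₂
      by_contra hne
      obtain ⟨hw₁e, hw₁0⟩ := Finset.mem_filter.mp hw₁
      obtain ⟨hw₂e, hw₂0⟩ := Finset.mem_filter.mp hw₂
      push_neg at hw₁0 hw₂0
      have hne' : w₁ ≠ w₂ := hne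
      have hw₁v : w₁ = (⟪v₀, w₁⟫_ℝ / ⟪v₀, v₀⟫_ℝ) • v₀ := by
        have h' := hw₁0; simp only [hproj] at h'; exact sub_eq_zero.mp h'
      have hw₂v : w₂ = (⟪v₀, w₂⟫_ℝ / ⟪v₀, v₀⟫_ℝ) • v₀ := by
        have h' := hw₂0; simp only [hproj] at h'; exact sub_eq_zero.mp h'
      have hc₁ : ⟪v₀, w₁⟫_ℝ / ⟪v₀, v₀⟫_ℝ < 0 := by
        rcases lt_or_eq_of_le (div_nonpos_of_nonpos_of_nonneg
          (hobt v₀ hv₀ w₁ (Finset.mem_of_mem_erase hw₁e) (Ne.symm (Finset.ne_of_mem_erase hw₁e)))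
          hv₀sq.le) with h | h
        · exact h
        · exfalso; apply h0
          have : w₁ = 0 := by rw [hw₁v, h, zero_smul]
          exact this ▸ Finset.mem_of_mem_erase hw₁e
      have hc₂ : ⟪v₀, w₂⟫_ℝ / ⟪v₀, v₀⟫_ℝ < 0 := by
        rcases lt_or_eq_of_le (div_nonpos_of_nonpos_of_nonneg
          (hobt v₀ hv₀ w₂ (Finset.mem_of_mem_erase hw₂e) (Ne.symm (Finset.ne_of_mem_erase hw₂e)))
          hv₀sq.le) with h | h
        · exact h
        · exfalso; apply h0
          have : w₂ = 0 := by rw [hw₂v, h, zero_smul]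
          exact this ▸ Finset.mem_of_mem_erase hw₂e
      have hpos : 0 < ⟪w₁, w₂⟫_ℝ := by
        rw [hw₁v, hw₂v, real_inner_smul_left, real_inner_smul_right]
        nlinarith [mul_pos_of_neg_of_neg hc₁ hc₂]
      have := hobt w₁ (Finset.mem_of_mem_erase hw₁e) w₂ (Finset.mem_of_mem_erase hw₂e) hne'
      linarith
    have hS1 : (S.erase v₀).card + 1 = S.card := Finset.card_erase_add_one hv₀
    omega

lemma sqrt_two_le_dist_iff {u v : E} :
    Real.sqrt 2 ≤ dist u v ↔ 2 ≤ ‖u‖ ^ 2 - 2 * ⟪u, v⟫_ℝ + ‖v‖ ^ 2 := by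
  rw [dist_eq_norm, ← norm_sub_sq_real]
  constructor
  · intro h
    have h2 : Real.sqrt 2 ^ 2 ≤ ‖u - v‖ ^ 2 :=
      pow_le_pow_left₀ (Real.sqrt_nonneg 2) h 2
    rwa [Real.sq_sqrt (by norm_num : (0:ℝ) ≤ 2)] at h2
  · intro h
    have := Real.sqrt_le_sqrt h
    rwa [Real.sqrt_sq (norm_nonneg _)] at this

/-- Structure lemma: a set of unit vectors closed under negation with all
non-(anti)parallel pairs orthogonal is `{±f i}` for an orthonormal family. -/
lemma pairs_structure : ∀ (m : ℕ) (S : Finset E), S.card = 2 * m →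
    (∀ u ∈ S, ‖u‖ = 1) → (∀ u ∈ S, -u ∈ S) →
    (∀ u ∈ S, ∀ x ∈ S, x ≠ u → x ≠ -u → ⟪u, x⟫_ℝ = 0) →
    ∃ f : Fin m → E, Orthonormal ℝ f ∧
      (S : Set E) = Set.range f ∪ Set.range (fun i => -f i) := by
  intro m
  induction m with
  | zero =>
    intro S hcard _ _ _
    refine ⟨fun i => i.elim0, ⟨fun i => i.elim0, fun i => i.elim0⟩, ?_⟩
    have : S = ∅ := Finset.card_eq_zero.mp (by omega)
    subst this
    simp
  | succ m IH =>
    intro S hcard hnorm hneg horth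
    classical
    have hSne : S.Nonempty := Finset.card_pos.mp (by omega)
    obtain ⟨u, hu⟩ := hSne
    have hu1 : ‖u‖ = 1 := hnorm u hu
    have hu0 : u ≠ 0 := by intro h; rw [h, norm_zero] at hu1; norm_num at hu1
    have huneg : -u ∈ S := hneg u hu
    have hune : -u ≠ u := by
      intro h
      apply hu0
      have h2 : u + u = 0 := by nth_rewrite 1 [← h]; exact neg_add_cancel u
      have h3 : (2 : ℝ) • u = 0 := by rw [two_smul]; exact h2
      simpa using (smul_eq_zero.mp h3).resolve_left (by norm_num)
    set S' : Finset E := (S.erase u).erase (-u) with hS'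
    have hcard' : S'.card = 2 * m := by
      rw [hS', Finset.card_erase_of_mem (Finset.mem_erase.mpr ⟨hune, huneg⟩),
        Finset.card_erase_of_mem hu]
      omega
    have hS'sub : ∀ x ∈ S', x ∈ S := by
      intro x hx
      exact Finset.mem_of_mem_erase (Finset.mem_of_mem_erase hx)
    have hS'ne : ∀ x ∈ S', x ≠ u ∧ x ≠ -u := by
      intro x hx
      exact ⟨Finset.ne_of_mem_erase (Finset.mem_of_mem_erase hx), Finset.ne_of_mem_erase hx⟩
    obtain ⟨f', hf'on, hf'range⟩ := IH S' hcard'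
      (fun x hx => hnorm x (hS'sub x hx))
      (by
        intro x hx
        refine Finset.mem_erase.mpr ⟨?_, Finset.mem_erase.mpr ⟨?_, hneg x (hS'sub x hx)⟩⟩
        · intro h
          exact (hS'ne x hx).1 (neg_injective h)
        · intro h
          exact (hS'ne x hx).2 (neg_eq_iff_eq_neg.mp h))
      (fun a ha x hx h1 h2 => horth a (hS'sub a ha) x (hS'sub x hx) h1 h2)
    have hf'S : ∀ i, f' i ∈ S' := by
      intro i
      have : f' i ∈ (S' : Set E) := by
        rw [hf'range]; exact Or.inl ⟨i, rfl⟩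
      exact_mod_cast this
    have hnf'S : ∀ i, -f' i ∈ S' := by
      intro i
      have : -f' i ∈ (S' : Set E) := by
        rw [hf'range]; exact Or.inr ⟨i, rfl⟩
      exact_mod_cast this
    refine ⟨Fin.cons u f', ?_, ?_⟩
    · rw [orthonormal_iff_ite]
      intro i j
      refine Fin.cases ?_ ?_ i
      · refine Fin.cases ?_ ?_ j
        · simp [real_inner_self_eq_norm_sq, hu1]
        · intro j'
          have h0 : ⟪u, f' j'⟫_ℝ = 0 :=
            horth u hu (f' j') (hS'sub _ (hf'S j')) (hS'ne _ (hf'S j')).1 (hS'ne _ (hf'S j')).2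
          simp [Fin.cons_succ, h0, (Fin.succ_ne_zero j').symm]
      · intro i'
        refine Fin.cases ?_ ?_ j
        · have h0 : ⟪u, f' i'⟫_ℝ = 0 :=
            horth u hu (f' i') (hS'sub _ (hf'S i')) (hS'ne _ (hf'S i')).1 (hS'ne _ (hf'S i')).2
          rw [real_inner_comm] at h0
          simp [Fin.cons_succ, h0, Fin.succ_ne_zero i']
        · intro j'
          have := (orthonormal_iff_ite.mp hf'on) i' j'
          simp only [Fin.cons_succ]
          rw [this]
          simp [Fin.succ_inj]
    · have hScoe : (S : Set E) = (S' : Set E) ∪ {u, -u} := by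
        rw [hS']
        push_cast [Finset.coe_erase]
        ext x
        constructor
        · intro hx
          by_cases h1 : x = u
          · exact Or.inr (Or.inl h1)
          by_cases h2 : x = -u
          · exact Or.inr (Or.inr h2)
          · exact Or.inl ⟨⟨hx, h1⟩, h2⟩
        · rintro (⟨⟨hx, _⟩, _⟩ | h | h)
          · exact hx
          · exact h ▸ hu
          · exact h ▸ huneg
      have hconsneg : (fun i => -(Fin.cons u f' : Fin (m+1) → E) i) =
          Fin.cons (-u) (fun j => -f' j) := by
        funext i
        refine Fin.cases ?_ ?_ i
        · simp
        · intro i'; simp [Fin.cons_succ]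
      rw [hScoe, hf'range, Fin.range_cons, hconsneg, Fin.range_cons]
      ext x
      simp only [Set.mem_union, Set.mem_insert_iff, Set.mem_singleton_iff]
      tauto

lemma crossW (n : ℕ) : ∃ W : Finset (EuclideanSpace ℝ (Fin n)),
    W.card = 2 * n ∧ (∀ w ∈ W, ‖w‖ = 1) ∧
    ∀ u ∈ W, ∀ v ∈ W, u ≠ v → Real.sqrt 2 ≤ dist u v := by
  classical
  set s : Fin n → EuclideanSpace ℝ (Fin n) := fun i => EuclideanSpace.single i (1:ℝ) with hs
  have hs_apply : ∀ i j, s i j = if j = i then (1:ℝ) else 0 := fun i j =>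
    EuclideanSpace.single_apply i 1 j
  have hs_inj : Function.Injective s := by
    intro i j h
    have : s i i = s j i := by rw [h]
    rw [hs_apply, hs_apply, if_pos rfl] at this
    split_ifs at this with hh
    · exact hh
    · norm_num at this
  have hsn : ∀ i j, s i ≠ -s j := by
    intro i j h
    have : s i j = (-s j) j := by rw [h]
    have h2 : (-s j) j = -1 := by
      show -(s j j) = -1
      rw [hs_apply, if_pos rfl]
    rw [h2, hs_apply] at this
    split_ifs at this <;> norm_num at this
  have hnorm : ∀ i, ‖s i‖ = 1 := by
    intro i
    rw [hs]
    simpa using EuclideanSpace.norm_single i (1:ℝ)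
  have hinner : ∀ i j, ⟪s i, s j⟫_ℝ = if i = j then 1 else 0 := by
    intro i j
    rw [hs]
    simp [EuclideanSpace.inner_single_left, EuclideanSpace.single_apply, eq_comm]
  set W : Finset (EuclideanSpace ℝ (Fin n)) :=
    (Finset.univ.image s) ∪ (Finset.univ.image (fun i => -s i)) with hW
  have hdisj : Disjoint (Finset.univ.image s) (Finset.univ.image (fun i => -s i)) := by
    rw [Finset.disjoint_left]
    intro a ha hb
    obtain ⟨i, _, rfl⟩ := Finset.mem_image.mp ha
    obtain ⟨j, _, hj⟩ := Finset.mem_image.mp hb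
    exact hsn i j hj.symm
  have hWcard : W.card = 2 * n := by
    rw [hW, Finset.card_union_of_disjoint hdisj,
      Finset.card_image_of_injective _ hs_inj,
      Finset.card_image_of_injective _ (fun a b h => hs_inj (neg_injective h) : Function.Injective (fun i => -s i))]
    simp [Finset.card_univ, two_mul]
  have hWmem : ∀ w ∈ W, (∃ i, w = s i) ∨ (∃ i, w = -s i) := by
    intro w hw
    rcases Finset.mem_union.mp hw with h | h
    · obtain ⟨i, _, rfl⟩ := Finset.mem_image.mp h; exact Or.inl ⟨i, rfl⟩
    · obtain ⟨i, _, rfl⟩ := Finset.mem_image.mp h; exact Or.inr ⟨i, rfl⟩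
  refine ⟨W, hWcard, ?_, ?_⟩
  · intro w hw
    rcases hWmem w hw with ⟨i, rfl⟩ | ⟨i, rfl⟩
    · exact hnorm i
    · rw [norm_neg]; exact hnorm i
  · intro u hu v hv huv
    have hip : ⟪u, v⟫_ℝ ≤ 0 := by
      rcases hWmem u hu with ⟨i, rfl⟩ | ⟨i, rfl⟩ <;>
        rcases hWmem v hv with ⟨j, rfl⟩ | ⟨j, rfl⟩
      · have hij : i ≠ j := fun h => huv (by rw [h])
        rw [hinner i j, if_neg hij]
      · rw [inner_neg_right, hinner i j]
        split_ifs <;> norm_num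
      · rw [inner_neg_left, hinner i j]
        split_ifs <;> norm_num
      · have hij : i ≠ j := fun h => huv (by rw [h])
        rw [inner_neg_left, inner_neg_right, hinner i j, if_neg hij]
        norm_num
    rw [sqrt_two_le_dist_iff]
    have h1 : ‖u‖ = 1 := by
      rcases hWmem u hu with ⟨i, rfl⟩ | ⟨i, rfl⟩
      · exact hnorm i
      · rw [norm_neg]; exact hnorm i
    have h2 : ‖v‖ = 1 := by
      rcases hWmem v hv with ⟨i, rfl⟩ | ⟨i, rfl⟩
      · exact hnorm i
      · rw [norm_neg]; exact hnorm i
    rw [h1, h2]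
    nlinarith

theorem cross_polytope_maximizes_min_distance (n : ℕ) (hn : 2 ≤ n)
    (V : Finset (EuclideanSpace ℝ (Fin n)))
    (hcard : V.card = 2 * n)
    (hball : ∀ v ∈ V, ‖v‖ ≤ 1)
    (hmax : ∀ W : Finset (EuclideanSpace ℝ (Fin n)), W.card = 2 * n →
      (∀ w ∈ W, ‖w‖ ≤ 1) → minPairDist W ≤ minPairDist V) :
    ∃ b : OrthonormalBasis (Fin n) ℝ (EuclideanSpace ℝ (Fin n)),
      (V : Set (EuclideanSpace ℝ (Fin n))) =
        Set.range (fun i => b i) ∪ Set.range (fun i => -b i) := by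
  classical
  obtain ⟨W, hWcard, hWnorm, hWdist⟩ := crossW n
  have hWle := hmax W hWcard (fun w hw => (hWnorm w hw).le)
  have hVlb : Real.sqrt 2 ≤ minPairDist V := by
    refine le_trans ?_ hWle
    apply le_csInf
    · have h1 : 1 < W.card := by omega
      obtain ⟨u, hu, v, hv, huv⟩ := Finset.one_lt_card.mp h1
      exact ⟨dist u v, u, hu, v, hv, huv, rfl⟩
    · rintro d ⟨u, hu, v, hv, huv, rfl⟩
      exact hWdist u hu v hv huv
  have hVdist : ∀ u ∈ V, ∀ v ∈ V, u ≠ v → Real.sqrt 2 ≤ dist u v := by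
    intro u hu v hv huv
    refine le_trans hVlb ?_
    apply csInf_le
    · exact ⟨0, by rintro d ⟨a, _, b, _, _, rfl⟩; exact dist_nonneg⟩
    · exact ⟨u, hu, v, hv, huv, rfl⟩
  have sqrt2gt1 : (1:ℝ) < Real.sqrt 2 := by
    rw [show (1:ℝ) = Real.sqrt 1 from (Real.sqrt_one).symm]
    exact Real.sqrt_lt_sqrt (by norm_num) (by norm_num)
  have hV0 : (0 : EuclideanSpace ℝ (Fin n)) ∉ V := by
    intro h0
    have h1 : 1 < V.card := by omega
    obtain ⟨a, ha, b, hb, hab⟩ := Finset.one_lt_card.mp h1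
    obtain ⟨v, hv, hv0⟩ : ∃ v ∈ V, v ≠ 0 := by
      by_cases h : a = 0
      · exact ⟨b, hb, fun hb0 => hab (by rw [h, hb0])⟩
      · exact ⟨a, ha, h⟩
    have hd := hVdist 0 h0 v hv (Ne.symm hv0)
    rw [dist_zero_left] at hd
    linarith [hball v hv]
  have hobtV : ∀ u ∈ V, ∀ v ∈ V, u ≠ v → ⟪u, v⟫_ℝ ≤ 0 := by
    intro u hu v hv huv
    have h := sqrt_two_le_dist_iff.mp (hVdist u hu v hv huv)
    have h1 := hball u hu
    have h2 := hball v hv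
    nlinarith [norm_nonneg u, norm_nonneg v]
  have hpartner : ∀ u ∈ V, ∃ w ∈ V, w ≠ u ∧ ∃ c : ℝ, c < 0 ∧ w = c • u := by
    intro u hu
    by_contra hno
    push_neg at hno
    have hu0 : u ≠ 0 := fun h => hV0 (h ▸ hu)
    have husq : (0:ℝ) < ⟪u, u⟫_ℝ := by
      rw [real_inner_self_eq_norm_sq]
      exact pow_pos (norm_pos_iff.mpr hu0) 2
    set proj : EuclideanSpace ℝ (Fin n) → EuclideanSpace ℝ (Fin n) :=
      fun w => w - (⟪u, w⟫_ℝ / ⟪u, u⟫_ℝ) • u with hproj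
    have hprojinner : ∀ w, ⟪u, proj w⟫_ℝ = 0 := by
      intro w
      simp only [hproj, inner_sub_right, real_inner_smul_right]
      rw [div_mul_cancel₀ _ (ne_of_gt husq), sub_self]
    have hprojprod : ∀ w₁ w₂, ⟪proj w₁, proj w₂⟫_ℝ
        = ⟪w₁, w₂⟫_ℝ - ⟪u, w₁⟫_ℝ * ⟪u, w₂⟫_ℝ / ⟪u, u⟫_ℝ := by
      intro w₁ w₂
      simp only [hproj, inner_sub_left, inner_sub_right, real_inner_smul_left,
        real_inner_smul_right, real_inner_comm w₁ u]
      generalize ⟪w₁, w₂⟫_ℝ = A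
      generalize ⟪u, w₁⟫_ℝ = B
      generalize ⟪u, w₂⟫_ℝ = C
      generalize hD : ⟪u, u⟫_ℝ = D
      rw [hD] at husq
      field_simp
      ring
    have hpne : ∀ w ∈ V.erase u, proj w ≠ 0 := by
      intro w hw h0'
      have hwV := Finset.mem_of_mem_erase hw
      have hwne := Finset.ne_of_mem_erase hw
      have hwv : w = (⟪u, w⟫_ℝ / ⟪u, u⟫_ℝ) • u := by
        have h' := h0'; simp only [hproj] at h'; exact sub_eq_zero.mp h'
      have hcle : ⟪u, w⟫_ℝ / ⟪u, u⟫_ℝ ≤ 0 :=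
        div_nonpos_of_nonpos_of_nonneg (hobtV u hu w hwV (Ne.symm hwne)) husq.le
      have hcne : ⟪u, w⟫_ℝ / ⟪u, u⟫_ℝ ≠ 0 := by
        intro h
        rw [h, zero_smul] at hwv
        exact hV0 (hwv ▸ hwV)
      exact hno w hwV hwne _ (lt_of_le_of_ne hcle hcne) hwv
    have hobt' : ∀ w₁ ∈ V.erase u, ∀ w₂ ∈ V.erase u, w₁ ≠ w₂ →
        ⟪proj w₁, proj w₂⟫_ℝ ≤ 0 := by
      intro w₁ hw₁ w₂ hw₂ hne
      rw [hprojprod]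
      have h1 : ⟪w₁, w₂⟫_ℝ ≤ 0 :=
        hobtV w₁ (Finset.mem_of_mem_erase hw₁) w₂ (Finset.mem_of_mem_erase hw₂) hne
      have h2 : ⟪u, w₁⟫_ℝ ≤ 0 :=
        hobtV u hu w₁ (Finset.mem_of_mem_erase hw₁) (Ne.symm (Finset.ne_of_mem_erase hw₁))
      have h3 : ⟪u, w₂⟫_ℝ ≤ 0 :=
        hobtV u hu w₂ (Finset.mem_of_mem_erase hw₂) (Ne.symm (Finset.ne_of_mem_erase hw₂))
      have h4 : 0 ≤ ⟪u, w₁⟫_ℝ * ⟪u, w₂⟫_ℝ / ⟪u, u⟫_ℝ :=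
        div_nonneg (by nlinarith) husq.le
      linarith
    have hinj : Set.InjOn proj (V.erase u) := by
      intro w₁ hw₁ w₂ hw₂ heq
      by_contra hne
      have hle := hobt' w₁ hw₁ w₂ hw₂ hne
      rw [← heq, real_inner_self_eq_norm_sq] at hle
      have hp0 : proj w₁ ≠ 0 := hpne w₁ hw₁
      have : (0:ℝ) < ‖proj w₁‖ ^ 2 := pow_pos (norm_pos_iff.mpr hp0) 2
      linarith
    set T := (V.erase u).image proj with hT
    have hTcard : T.card = 2 * n - 1 := by
      rw [hT, Finset.card_image_of_injOn hinj, Finset.card_erase_of_mem hu, hcard]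
    have hfr : finrank ℝ ((ℝ ∙ u)ᗮ : Submodule ℝ (EuclideanSpace ℝ (Fin n))) ≤ n - 1 := by
      have h1 := Submodule.finrank_add_finrank_orthogonal (ℝ ∙ u)
      rw [finrank_span_singleton hu0, finrank_euclideanSpace_fin] at h1
      omega
    have hTle : T.card ≤ 2 * (n - 1) := by
      refine obtuse_card_le (n - 1) ((ℝ ∙ u)ᗮ) hfr T ?_ ?_ ?_
      · intro t ht
        obtain ⟨w, hw, rfl⟩ := Finset.mem_image.mp ht
        rw [Submodule.mem_orthogonal_singleton_iff_inner_right]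
        exact hprojinner w
      · intro h0'
        obtain ⟨w, hw, hwe⟩ := Finset.mem_image.mp h0'
        exact hpne w hw hwe
      · intro t₁ ht₁ t₂ ht₂ htne
        obtain ⟨w₁, hw₁, rfl⟩ := Finset.mem_image.mp ht₁
        obtain ⟨w₂, hw₂, rfl⟩ := Finset.mem_image.mp ht₂
        exact hobt' w₁ hw₁ w₂ hw₂ (fun h => htne (h ▸ rfl))
    omega
  have hnorm1 : ∀ u ∈ V, ‖u‖ = 1 := by
    intro u hu
    obtain ⟨w, hw, hwne, c, hc, hwc⟩ := hpartner u hu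
    have h2V : 2 < V.card := by omega
    have hex : ((V.erase u).erase w).Nonempty := by
      rw [← Finset.card_pos]
      have h1 : (V.erase u).card = V.card - 1 := Finset.card_erase_of_mem hu
      have h2 : ((V.erase u).erase w).card ≥ (V.erase u).card - 1 := Finset.pred_card_le_card_erase
      omega
    obtain ⟨x, hx⟩ := hex
    have hxw : x ≠ w := Finset.ne_of_mem_erase hx
    have hxu : x ≠ u := Finset.ne_of_mem_erase (Finset.mem_of_mem_erase hx)
    have hxV : x ∈ V := Finset.mem_of_mem_erase (Finset.mem_of_mem_erase hx)
    have hux0 : ⟪u, x⟫_ℝ = 0 := by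
      have h1 : ⟪u, x⟫_ℝ ≤ 0 := hobtV u hu x hxV (Ne.symm hxu)
      have h2 : ⟪w, x⟫_ℝ ≤ 0 := hobtV w hw x hxV (Ne.symm hxw)
      rw [hwc, real_inner_smul_left] at h2
      nlinarith
    have hd := sqrt_two_le_dist_iff.mp (hVdist u hu x hxV (Ne.symm hxu))
    rw [hux0] at hd
    have h1 := hball u hu
    have h2 := hball x hxV
    refine le_antisymm h1 ?_
    nlinarith [norm_nonneg u, norm_nonneg x]
  have hnegV : ∀ u ∈ V, -u ∈ V := by
    intro u hu
    obtain ⟨w, hw, hwne, c, hc, hwc⟩ := hpartner u hu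
    have hwn : ‖w‖ = 1 := hnorm1 w hw
    rw [hwc, norm_smul, hnorm1 u hu, mul_one] at hwn
    have hcm : c = -1 := by
      rcases abs_eq (by norm_num : (0:ℝ) ≤ 1) |>.mp (by simpa using hwn) with h | h
      · linarith
      · exact h
    rw [hcm] at hwc
    rw [neg_one_smul] at hwc
    exact hwc ▸ hw
  have horthV : ∀ u ∈ V, ∀ x ∈ V, x ≠ u → x ≠ -u → ⟪u, x⟫_ℝ = 0 := by
    intro u hu x hx h1 h2
    have hle : ⟪u, x⟫_ℝ ≤ 0 := hobtV u hu x hx (Ne.symm h1)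
    have hnu : -u ∈ V := hnegV u hu
    have hle2 : ⟪-u, x⟫_ℝ ≤ 0 := hobtV (-u) hnu x hx (fun h => h2 h.symm)
    rw [inner_neg_left] at hle2
    linarith
  obtain ⟨f, hfon, hfrange⟩ := pairs_structure n V hcard hnorm1 hnegV horthV
  haveI : Nonempty (Fin n) := ⟨⟨0, by omega⟩⟩
  have hcardeq : Fintype.card (Fin n) = finrank ℝ (EuclideanSpace ℝ (Fin n)) := by
    simp [finrank_euclideanSpace]
  let basis := basisOfOrthonormalOfCardEqFinrank hfon hcardeq
  have hb : ⇑basis = f := coe_basisOfOrthonormalOfCardEqFinrank hfon hcardeq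
  refine ⟨basis.toOrthonormalBasis (by rw [hb]; exact hfon), ?_⟩
  rw [Basis.coe_toOrthonormalBasis, hb]
  exact hfrange
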